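/- Let p be prime, n a positive integer with gcd(n, p) = 1, and R4 = Z_p[u]/(u^4). Let C be a cyclic code of length n over R4 of the form C = <g(x), u·a1(x), u^2·a2(x), u^3·a3(x)> with a3(x) | a2(x) | a1(x) | g(x) | (x^n - 1) in Z_p[x]. Then C is the principal ideal generated by g(x) + u·a1(x) + u^2·a2(x) + u^3·a3(x). -/

import Mathlib

open Polynomial

noncomputable section

/-- `Ru p k` is the ring `R_k = Z_p[u]/(u^k)`. -/
abbrev Ru (p k : ℕ) : Type := Polynomial (ZMod p) ⧸ Ideal.span {(X : Polynomial (ZMod p)) ^ k}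

instance (p k : ℕ) : CommRing (Ru p k) := Ideal.Quotient.commRing _

/-- The element `u` of `Ru p k`. -/
abbrev uR (p k : ℕ) : Ru p k := Ideal.Quotient.mk _ (X : Polynomial (ZMod p))

/-- `Rn p k n` is the ring `R_k[x]/(x^n - 1)`; its ideals are the cyclic codes of length `n`. -/
abbrev Rn (p k n : ℕ) : Type :=
  Polynomial (Ru p k) ⧸ Ideal.span {(X : Polynomial (Ru p k)) ^ n - 1}

/-- The natural ring map `Z_p[x] → R_k[x]/(x^n - 1)`. -/
abbrev liftP (p k n : ℕ) : Polynomial (ZMod p) →+* Rn p k n :=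
  (Ideal.Quotient.mk _).comp (mapRingHom (algebraMap (ZMod p) (Ru p k)))

/-- `u` as an element of `R_k[x]/(x^n - 1)`. -/
abbrev uu (p k n : ℕ) : Rn p k n := Ideal.Quotient.mk _ (C (uR p k))

/-- `x` as an element of `R_k[x]/(x^n - 1)`. -/
abbrev xx (p k n : ℕ) : Rn p k n := Ideal.Quotient.mk _ (X : Polynomial (Ru p k))

/-- Key divisibility computation in an arbitrary commutative ring. -/
theorem key_dvd {R : Type*} [CommRing R] (U Pg P1 P2 P3 Pc1 Pc2 H0 s t s1 t1 s2 t2 : R)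
    (hU : U ^ 4 = 0)
    (e1 : Pg = P1 * Pc1) (e2 : P1 = P2 * Pc2)
    (e0 : Pg * H0 = 0)
    (b0 : s * Pg + t * H0 = 1)
    (b1 : s1 * P1 + t1 * (Pc1 * H0) = 1)
    (b2 : s2 * P2 + t2 * (Pc2 * Pc1 * H0) = 1) :
    (Pg + U * P1 + U ^ 2 * P2 + U ^ 3 * P3) ∣ Pg ∧
    (Pg + U * P1 + U ^ 2 * P2 + U ^ 3 * P3) ∣ U * P1 ∧
    (Pg + U * P1 + U ^ 2 * P2 + U ^ 3 * P3) ∣ U ^ 2 * P2 ∧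
    (Pg + U * P1 + U ^ 2 * P2 + U ^ 3 * P3) ∣ U ^ 3 * P3 := by
  set G := Pg + U * P1 + U ^ 2 * P2 + U ^ 3 * P3 with hG
  have hA : G ∣ U ^ 3 * Pg := ⟨U ^ 3, by
    rw [hG]; linear_combination (-(P1 : R) - U * P2 - U ^ 2 * P3) * hU⟩
  have hB : G ∣ U ^ 3 * (H0 * P1) := ⟨U ^ 2 * H0, by
    rw [hG]; linear_combination (-(U : R) ^ 2) * e0 + (-(H0 : R) * P2 - U * H0 * P3) * hU⟩
  have hC3 : G ∣ U ^ 3 * P1 := by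
    have h : U ^ 3 * P1 = (s * P1) * (U ^ 3 * Pg) + t * (U ^ 3 * (H0 * P1)) := by
      linear_combination (-(U : R) ^ 3 * P1) * b0
    rw [h]; exact dvd_add (hA.mul_left _) (hB.mul_left _)
  have hD : G ∣ U ^ 3 * (Pc1 * H0 * P2) := ⟨U * Pc1 * H0, by
    rw [hG]
    linear_combination (-(U : R) * Pc1 - U ^ 2) * e0 + ((U : R) ^ 2 * H0) * e1
      + (-(Pc1 : R) * H0 * P3) * hU⟩
  have hE : G ∣ U ^ 3 * P2 := by
    have h : U ^ 3 * P2 = (s1 * P2) * (U ^ 3 * P1) + t1 * (U ^ 3 * (Pc1 * H0 * P2)) := by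
      linear_combination (-(U : R) ^ 3 * P2) * b1
    rw [h]; exact dvd_add (hC3.mul_left _) (hD.mul_left _)
  have hF : G ∣ U ^ 3 * (Pc2 * Pc1 * H0 * P3) := ⟨Pc2 * Pc1 * H0, by
    rw [hG]
    linear_combination (-(Pc2 : R) * Pc1 - U * Pc2 - U ^ 2) * e0
      + ((U : R) * Pc2 * H0 + U ^ 2 * H0) * e1 + ((U : R) ^ 2 * Pc1 * H0) * e2⟩
  have hG3 : G ∣ U ^ 3 * P3 := by
    have h : U ^ 3 * P3 = (s2 * P3) * (U ^ 3 * P2) + t2 * (U ^ 3 * (Pc2 * Pc1 * H0 * P3)) := by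
      linear_combination (-(U : R) ^ 3 * P3) * b2
    rw [h]; exact dvd_add (hE.mul_left _) (hF.mul_left _)
  have hH : G ∣ U ^ 2 * Pg := by
    have h : U ^ 2 * Pg = U ^ 2 * G - U ^ 3 * P1 := by
      rw [hG]; linear_combination (-(P2 : R) - U * P3) * hU
    rw [h]; exact dvd_sub (dvd_mul_left G (U ^ 2)) hC3
  have hI : G ∣ U ^ 2 * (H0 * P1) := by
    have h : U ^ 2 * (H0 * P1) = U * H0 * G - H0 * (U ^ 3 * P2) := by
      rw [hG]; linear_combination (-(U : R)) * e0 + (-(H0 : R) * P3) * hU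
    rw [h]; exact dvd_sub (dvd_mul_left G (U * H0)) (hE.mul_left H0)
  have hJ : G ∣ U ^ 2 * P1 := by
    have h : U ^ 2 * P1 = (s * P1) * (U ^ 2 * Pg) + t * (U ^ 2 * (H0 * P1)) := by
      linear_combination (-(U : R) ^ 2 * P1) * b0
    rw [h]; exact dvd_add (hH.mul_left _) (hI.mul_left _)
  have hK : G ∣ U ^ 2 * (Pc1 * H0 * P2) := by
    have h : U ^ 2 * (Pc1 * H0 * P2) = Pc1 * H0 * G - Pc1 * H0 * (U ^ 3 * P3) := by
      rw [hG]; linear_combination (-(Pc1 : R) - U) * e0 + ((U : R) * H0) * e1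
    rw [h]; exact dvd_sub (dvd_mul_left G (Pc1 * H0)) (hG3.mul_left (Pc1 * H0))
  have hL : G ∣ U ^ 2 * P2 := by
    have h : U ^ 2 * P2 = (s1 * P2) * (U ^ 2 * P1) + t1 * (U ^ 2 * (Pc1 * H0 * P2)) := by
      linear_combination (-(U : R) ^ 2 * P2) * b1
    rw [h]; exact dvd_add (hJ.mul_left _) (hK.mul_left _)
  have hM : G ∣ U * Pg := by
    have h : U * Pg = U * G - U ^ 2 * P1 - U * (U ^ 2 * P2) := by
      rw [hG]; linear_combination (-(P3 : R)) * hU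
    rw [h]; exact dvd_sub (dvd_sub (dvd_mul_left G U) hJ) (hL.mul_left U)
  have hN : G ∣ U * (H0 * P1) := by
    have h : U * (H0 * P1) = H0 * G - H0 * (U ^ 2 * P2) - H0 * (U ^ 3 * P3) := by
      rw [hG]; linear_combination (-(1 : R)) * e0
    rw [h]; exact dvd_sub (dvd_sub (dvd_mul_left G H0) (hL.mul_left H0)) (hG3.mul_left H0)
  have hO : G ∣ U * P1 := by
    have h : U * P1 = (s * P1) * (U * Pg) + t * (U * (H0 * P1)) := by
      linear_combination (-(U : R) * P1) * b0
    rw [h]; exact dvd_add (hM.mul_left _) (hN.mul_left _)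
  have hP : G ∣ Pg := by
    have h : Pg = G - U * P1 - U ^ 2 * P2 - U ^ 3 * P3 := by rw [hG]; ring
    rw [h]; exact dvd_sub (dvd_sub (dvd_sub dvd_rfl hO) hL) hG3
  exact ⟨hP, hO, hL, hG3⟩

/-- Over `R_4 = Z_p[u]/(u^4)`, if `gcd(n,p) = 1` and
`C = <g(x), u a1(x), u^2 a2(x), u^3 a3(x)>` with `a3 ∣ a2 ∣ a1 ∣ g ∣ x^n - 1` in `Z_p[x]`,
then `C = <g(x) + u a1(x) + u^2 a2(x) + u^3 a3(x)>`. -/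
theorem stmt2 (p n : ℕ) (hp : p.Prime) (hn : 0 < n) (hco : Nat.Coprime n p)
    (g a1 a2 a3 : Polynomial (ZMod p)) (Ck : Ideal (Rn p 4 n))
    (h32 : a3 ∣ a2) (h21 : a2 ∣ a1) (h1g : a1 ∣ g)
    (hg : g ∣ (X : Polynomial (ZMod p)) ^ n - 1)
    (hC : Ck = Ideal.span {liftP p 4 n g, uu p 4 n * liftP p 4 n a1,
      uu p 4 n ^ 2 * liftP p 4 n a2, uu p 4 n ^ 3 * liftP p 4 n a3}) :
    Ck = Ideal.span {liftP p 4 n g + uu p 4 n * liftP p 4 n a1 +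
      uu p 4 n ^ 2 * liftP p 4 n a2 + uu p 4 n ^ 3 * liftP p 4 n a3} := by
  haveI : Fact p.Prime := ⟨hp⟩
  set φ := liftP p 4 n with hφ
  set U := uu p 4 n with hUdef
  obtain ⟨h0, hh0⟩ := hg
  obtain ⟨c1, hc1⟩ := h1g
  obtain ⟨c2, hc2⟩ := h21
  -- `X^n - 1` is squarefree over `ZMod p`
  have hpn : ((n : ZMod p)) ≠ 0 := by
    rw [Ne, ZMod.natCast_eq_zero_iff]
    exact (Nat.Prime.coprime_iff_not_dvd hp).mp hco.symm
  have hsep : ((X : Polynomial (ZMod p)) ^ n - C 1).Separable :=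
    separable_X_pow_sub_C 1 hpn one_ne_zero
  have hsq : Squarefree ((X : Polynomial (ZMod p)) ^ n - 1) := by
    simpa using hsep.squarefree
  have copr : ∀ a b : Polynomial (ZMod p), a * b = (X : Polynomial (ZMod p)) ^ n - 1 →
      IsCoprime a b := by
    intro a b hab
    have : Squarefree (a * b) := by rw [hab]; exact hsq
    exact ((squarefree_mul_iff.mp this).1).isCoprime
  obtain ⟨s, t, hb0⟩ := copr g h0 hh0.symm
  obtain ⟨s1, t1, hb1⟩ := copr a1 (c1 * h0) (by rw [hh0, hc1]; ring)
  obtain ⟨s2, t2, hb2⟩ := copr a2 (c2 * c1 * h0) (by rw [hh0, hc1, hc2]; ring)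
  -- u^4 = 0 in Rn
  have hu4 : (uR p 4) ^ 4 = 0 := by
    rw [← map_pow]
    exact Ideal.Quotient.eq_zero_iff_mem.mpr (Ideal.subset_span rfl)
  have hU4 : U ^ 4 = 0 := by
    rw [hUdef]
    show (Ideal.Quotient.mk _ (C (uR p 4))) ^ 4 = 0
    rw [← map_pow, ← C_pow, hu4, map_zero, map_zero]
  -- x^n - 1 maps to 0 in Rn
  have hz : φ ((X : Polynomial (ZMod p)) ^ n - 1) = 0 := by
    rw [hφ]
    show Ideal.Quotient.mk _ (Polynomial.map _ ((X : Polynomial (ZMod p)) ^ n - 1)) = 0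
    rw [Polynomial.map_sub, Polynomial.map_pow, map_X, Polynomial.map_one]
    exact Ideal.Quotient.eq_zero_iff_mem.mpr (Ideal.subset_span rfl)
  -- transfer the data to Rn
  have e1 : φ g = φ a1 * φ c1 := by rw [hc1, map_mul]
  have e2 : φ a1 = φ a2 * φ c2 := by rw [hc2, map_mul]
  have e0 : φ g * φ h0 = 0 := by rw [← map_mul, ← hh0]; exact hz
  have b0 : φ s * φ g + φ t * φ h0 = 1 := by
    simpa [map_add, map_mul, map_one] using congrArg φ hb0
  have b1 : φ s1 * φ a1 + φ t1 * (φ c1 * φ h0) = 1 := by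
    simpa [map_add, map_mul, map_one] using congrArg φ hb1
  have b2 : φ s2 * φ a2 + φ t2 * (φ c2 * φ c1 * φ h0) = 1 := by
    simpa [map_add, map_mul, map_one] using congrArg φ hb2
  obtain ⟨d0, d1, d2, d3⟩ := key_dvd U (φ g) (φ a1) (φ a2) (φ a3) (φ c1) (φ c2) (φ h0)
    (φ s) (φ t) (φ s1) (φ t1) (φ s2) (φ t2) hU4 e1 e2 e0 b0 b1 b2
  rw [hC]
  apply le_antisymm
  · rw [Ideal.span_le]
    intro x hx
    simp only [Set.mem_insert_iff, Set.mem_singleton_iff] at hx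
    rcases hx with rfl | rfl | rfl | rfl
    · exact (Ideal.mem_span_singleton (α := Rn p 4 n)).mpr d0
    · exact (Ideal.mem_span_singleton (α := Rn p 4 n)).mpr d1
    · exact (Ideal.mem_span_singleton (α := Rn p 4 n)).mpr d2
    · exact (Ideal.mem_span_singleton (α := Rn p 4 n)).mpr d3
  · rw [Ideal.span_le, Set.singleton_subset_iff]
    have m1 : φ g ∈ Ideal.span {φ g, U * φ a1, U ^ 2 * φ a2, U ^ 3 * φ a3} :=
      Ideal.subset_span (by simp)
    have m2 : U * φ a1 ∈ Ideal.span {φ g, U * φ a1, U ^ 2 * φ a2, U ^ 3 * φ a3} :=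
      Ideal.subset_span (by simp)
    have m3 : U ^ 2 * φ a2 ∈ Ideal.span {φ g, U * φ a1, U ^ 2 * φ a2, U ^ 3 * φ a3} :=
      Ideal.subset_span (by simp)
    have m4 : U ^ 3 * φ a3 ∈ Ideal.span {φ g, U * φ a1, U ^ 2 * φ a2, U ^ 3 * φ a3} :=
      Ideal.subset_span (by simp)
    exact Ideal.add_mem _ (Ideal.add_mem _ (Ideal.add_mem _ m1 m2) m3) m4
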